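/- Let f : ℝⁿ → ℝ be C¹ with L-Lipschitz gradient and bounded below by f*. Let x_{k+1} = x_k − α g_k, where g_k is a random vector with E[g_k | x_k] = ∇f(x_k) and E[‖g_k − ∇f(x_k)‖² | x_k] ≤ (ν_{IT}² + ν_{OT}²)‖∇f(x_k)‖². If α ≤ 1/((1 + ν_{IT}² + ν_{OT}²)L), then for every T ≥ 1, min_{0 ≤ k ≤ T−1} E[‖∇f(x_k)‖²] ≤ (2/(αT))(f(x₀) − f*). -/

import Mathlib

open MeasureTheory Filter InnerProductSpace

lemma sgd_descent_aux {E : Type*} [NormedAddCommGroup E] [InnerProductSpace ℝ E]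
    [CompleteSpace E] (f : E → ℝ) (L : NNReal) (hf : ContDiff ℝ 1 f)
    (hlip : LipschitzWith L (gradient f)) (x y : E) :
    f y ≤ f x + ⟪gradient f x, y - x⟫_ℝ + (L : ℝ) / 2 * ‖y - x‖ ^ 2 := by
  set v := y - x with hv
  have hgradcont : Continuous (gradient f) := hlip.continuous
  have hdiff : ∀ z, HasFDerivAt f (fderiv ℝ f z) z :=
    fun z => (hf.differentiable one_ne_zero z).hasFDerivAt
  have hgrad : ∀ z w, ⟪gradient f z, w⟫_ℝ = fderiv ℝ f z w := by
    intro z w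
    simp only [gradient, toDual_symm_apply]
  have hc : ∀ t : ℝ, HasDerivAt (fun t : ℝ => x + t • v) v t := by
    intro t
    simpa using ((hasDerivAt_id t).smul_const v).const_add x
  have hφ : ∀ t : ℝ, HasDerivAt (fun t : ℝ => f (x + t • v))
      (⟪gradient f (x + t • v), v⟫_ℝ) t := by
    intro t
    rw [hgrad]
    exact (hdiff (x + t • v)).comp_hasDerivAt t (hc t)
  have hcont : Continuous fun t : ℝ => ⟪gradient f (x + t • v), v⟫_ℝ := by
    exact (hgradcont.comp (by fun_prop)).inner continuous_const
  have hftc : ∫ t in (0:ℝ)..1, ⟪gradient f (x + t • v), v⟫_ℝ = f y - f x := by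
    have := intervalIntegral.integral_eq_sub_of_hasDerivAt
      (f := fun t : ℝ => f (x + t • v)) (a := (0:ℝ)) (b := 1)
      (fun t _ => hφ t) (hcont.intervalIntegrable 0 1)
    simpa [hv] using this
  have hbound : ∀ t ∈ Set.Icc (0:ℝ) 1,
      ⟪gradient f (x + t • v), v⟫_ℝ ≤ ⟪gradient f x, v⟫_ℝ + ((L : ℝ) * ‖v‖ ^ 2) * t := by
    intro t ht
    have h1 : ⟪gradient f (x + t • v), v⟫_ℝ - ⟪gradient f x, v⟫_ℝ
        = ⟪gradient f (x + t • v) - gradient f x, v⟫_ℝ := by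
      rw [inner_sub_left]
    have h2 : ⟪gradient f (x + t • v) - gradient f x, v⟫_ℝ
        ≤ ‖gradient f (x + t • v) - gradient f x‖ * ‖v‖ := real_inner_le_norm _ _
    have h3 : ‖gradient f (x + t • v) - gradient f x‖ ≤ (L : ℝ) * (t * ‖v‖) := by
      have := hlip.dist_le_mul (x + t • v) x
      rw [dist_eq_norm, dist_eq_norm] at this
      calc ‖gradient f (x + t • v) - gradient f x‖ ≤ (L : ℝ) * ‖x + t • v - x‖ := this
        _ = (L : ℝ) * (t * ‖v‖) := by
            rw [add_sub_cancel_left, norm_smul, Real.norm_eq_abs, abs_of_nonneg ht.1]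
    nlinarith [norm_nonneg v, ht.1]
  have hint :
      ∫ t in (0:ℝ)..1, ⟪gradient f (x + t • v), v⟫_ℝ
        ≤ ∫ t in (0:ℝ)..1, (⟪gradient f x, v⟫_ℝ + ((L : ℝ) * ‖v‖ ^ 2) * t) := by
    refine intervalIntegral.integral_mono_on (by norm_num)
      (hcont.intervalIntegrable 0 1) (by apply Continuous.intervalIntegrable; fun_prop) hbound
  have hval : ∫ t in (0:ℝ)..1, (⟪gradient f x, v⟫_ℝ + ((L : ℝ) * ‖v‖ ^ 2) * t)
      = ⟪gradient f x, v⟫_ℝ + (L : ℝ) / 2 * ‖v‖ ^ 2 := by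
    rw [intervalIntegral.integral_add (intervalIntegrable_const)
      (by apply Continuous.intervalIntegrable; fun_prop),
      intervalIntegral.integral_const_mul, integral_id]
    norm_num
    ring
  rw [hftc] at hint
  rw [hval] at hint
  linarith

lemma sgd_condexp_clm {α E F : Type*} {m m0 : MeasurableSpace α} {μ : Measure α}
    [NormedAddCommGroup E] [NormedSpace ℝ E] [CompleteSpace E]
    [NormedAddCommGroup F] [NormedSpace ℝ F] [CompleteSpace F]
    (hm : m ≤ m0) [SigmaFinite (μ.trim hm)] (T : E →L[ℝ] F) {g : α → E}
    (hg : Integrable g μ) :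
    (fun ω => T ((μ[g|m]) ω)) =ᵐ[μ] μ[fun ω => T (g ω)|m] := by
  refine ae_eq_condExp_of_forall_setIntegral_eq hm (T.integrable_comp hg) ?_ ?_ ?_
  · intro s _ _
    exact (T.integrable_comp integrable_condExp).integrableOn
  · intro s hs hμs
    rw [T.integral_comp_comm integrable_condExp.integrableOn,
      T.integral_comp_comm hg.integrableOn, setIntegral_condExp hm hg hs]
  · exact StronglyMeasurable.aestronglyMeasurable
      (T.continuous.comp_stronglyMeasurable stronglyMeasurable_condExp)

lemma sgd_integrable_inner {α E : Type*} [MeasurableSpace α] {μ : Measure α}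
    [NormedAddCommGroup E] [InnerProductSpace ℝ E] {u v : α → E}
    (hu : MemLp u 2 μ) (hv : MemLp v 2 μ) :
    Integrable (fun ω => (⟪u ω, v ω⟫_ℝ)) μ := by
  have h := MeasureTheory.L2.integrable_inner (𝕜 := ℝ) (hu.toLp u) (hv.toLp v)
  refine h.congr ?_
  filter_upwards [hu.coeFn_toLp, hv.coeFn_toLp] with ω h1 h2
  rw [h1, h2]

set_option maxHeartbeats 1000000 in
/-- Convergence of stochastic gradient descent under the augmented inner product
test: with conditionally unbiased gradient estimates whose conditional variance is
bounded by `(ν_IT² + ν_OT²)‖∇f(x_k)‖²`, and step length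
`α ≤ 1/((1 + ν_IT² + ν_OT²) L)`, one has
`min_{0 ≤ k ≤ T−1} E[‖∇f(x_k)‖²] ≤ (2/(αT)) (f(x₀) − f*)`. -/
theorem sgd_min_gradient_bound
    {n : ℕ} {Ω : Type*} [MeasurableSpace Ω] (μ : Measure Ω) [IsProbabilityMeasure μ]
    (f : EuclideanSpace ℝ (Fin n) → ℝ) (fstar : ℝ) (L : NNReal) (hL : 0 < (L : ℝ))
    (hf : ContDiff ℝ 1 f)
    (hlip : LipschitzWith L (gradient f))
    (hbelow : ∀ z, fstar ≤ f z)
    (νIT νOT α : ℝ) (hνIT : 0 < νIT) (hνOT : 0 < νOT) (hα : 0 < α)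
    (hstep : α ≤ 1 / ((1 + νIT ^ 2 + νOT ^ 2) * (L : ℝ)))
    (x g : ℕ → Ω → EuclideanSpace ℝ (Fin n)) (x0 : EuclideanSpace ℝ (Fin n))
    (hx0 : ∀ ω, x 0 ω = x0)
    (hupdate : ∀ k ω, x (k + 1) ω = x k ω - α • g k ω)
    (hxmeas : ∀ k, Measurable (x k)) (hgmeas : ∀ k, Measurable (g k))
    (hgL2 : ∀ k, MemLp (g k) 2 μ)
    -- conditional unbiasedness: E[g_k | x_k] = ∇f(x_k)
    (hunbiased : ∀ k,
      μ[g k | MeasurableSpace.comap (x k) inferInstance]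
        =ᵐ[μ] fun ω => gradient f (x k ω))
    -- conditional variance bound: E[‖g_k − ∇f(x_k)‖² | x_k] ≤ (ν_IT² + ν_OT²)‖∇f(x_k)‖²
    (hvariance : ∀ k, ∀ᵐ ω ∂μ,
      (μ[(fun ω' => ‖g k ω' - gradient f (x k ω')‖ ^ 2) |
          MeasurableSpace.comap (x k) inferInstance]) ω
        ≤ (νIT ^ 2 + νOT ^ 2) * ‖gradient f (x k ω)‖ ^ 2) :
    ∀ T : ℕ, 1 ≤ T → ∃ k < T,
      ∫ ω, ‖gradient f (x k ω)‖ ^ 2 ∂μ ≤ 2 / (α * T) * (f x0 - fstar) := by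
  intro T hT
  classical
  have hν2 : (0:ℝ) < νIT ^ 2 + νOT ^ 2 := by positivity
  have hgradcont : Continuous (gradient f) := hlip.continuous
  -- L² membership of iterates
  have hxL2 : ∀ k, MemLp (x k) 2 μ := by
    intro k; induction k with
    | zero =>
      have hx : x 0 = fun _ => x0 := funext hx0
      rw [hx]; exact memLp_const x0
    | succ k ih =>
      have hx : x (k + 1) = fun ω => x k ω - α • g k ω := funext (hupdate k)
      rw [hx]; exact ih.sub ((hgL2 k).const_smul α)
  -- L² membership of gradients
  have hhL2 : ∀ k, MemLp (fun ω => gradient f (x k ω)) 2 μ := by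
    intro k
    have hsub : MemLp (fun ω => x k ω - x0) 2 μ := (hxL2 k).sub (memLp_const x0)
    have hmeas : AEStronglyMeasurable (fun ω => gradient f (x k ω) - gradient f x0) μ := by
      apply AEStronglyMeasurable.sub _ aestronglyMeasurable_const
      exact (hgradcont.measurable.comp (hxmeas k)).aestronglyMeasurable
    have h1 : MemLp (fun ω => gradient f (x k ω) - gradient f x0) 2 μ := by
      refine MemLp.of_le_mul (c := (L : ℝ)) hsub hmeas (Eventually.of_forall fun ω => ?_)
      have h2 := hlip.dist_le_mul (x k ω) x0
      rw [dist_eq_norm, dist_eq_norm] at h2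
      simpa using h2
    have hfe : (fun ω => gradient f (x k ω))
        = fun ω => (gradient f (x k ω) - gradient f x0) + gradient f x0 := by
      funext ω; simp
    rw [hfe]; exact h1.add (memLp_const _)
  -- coordinate L² membership
  have hcoordL2 : ∀ (u : Ω → EuclideanSpace ℝ (Fin n)), MemLp u 2 μ → ∀ i,
      MemLp (fun ω => u ω i) 2 μ := by
    intro u hu i
    exact (EuclideanSpace.proj (𝕜 := ℝ) i).comp_memLp' hu
  -- strong measurability of gradient coordinates w.r.t. comap
  have hhm : ∀ k (i : Fin n), StronglyMeasurable[MeasurableSpace.comap (x k) inferInstance]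
      (fun ω => gradient f (x k ω) i) := by
    intro k i
    have hx : Measurable[MeasurableSpace.comap (x k) inferInstance] (x k) :=
      Measurable.of_comap_le le_rfl
    exact (((EuclideanSpace.proj (𝕜 := ℝ) i).continuous.comp
      hgradcont).measurable.comp hx).stronglyMeasurable
  -- cross term
  have hcross : ∀ k, ∫ ω, ⟪gradient f (x k ω), g k ω⟫_ℝ ∂μ
      = ∫ ω, ‖gradient f (x k ω)‖ ^ 2 ∂μ := by
    intro k
    have hmle : MeasurableSpace.comap (x k) inferInstance ≤ _ := (hxmeas k).comap_le
    have hgint : Integrable (g k) μ := (hgL2 k).integrable one_le_two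
    have hco : ∀ i : Fin n,
        (μ[(fun ω => g k ω i)|MeasurableSpace.comap (x k) inferInstance])
          =ᵐ[μ] fun ω => gradient f (x k ω) i := by
      intro i
      have h1 := (sgd_condexp_clm hmle (EuclideanSpace.proj (𝕜 := ℝ) i) hgint).symm
      refine EventuallyEq.trans h1 ?_
      filter_upwards [hunbiased k] with ω hω
      simp only [hω]
      rfl
    have hint_uv : ∀ i : Fin n, Integrable (fun ω => gradient f (x k ω) i * g k ω i) μ := by
      intro i
      have h2 := sgd_integrable_inner (hcoordL2 _ (hhL2 k) i) (hcoordL2 _ (hgL2 k) i)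
      refine h2.congr (Eventually.of_forall fun ω => ?_)
      simp [RCLike.inner_apply, conj_trivial]
      ring
    have hint_uu : ∀ i : Fin n, Integrable (fun ω => gradient f (x k ω) i * gradient f (x k ω) i) μ := by
      intro i
      have h2 := sgd_integrable_inner (hcoordL2 _ (hhL2 k) i) (hcoordL2 _ (hhL2 k) i)
      refine h2.congr (Eventually.of_forall fun ω => ?_)
      simp [RCLike.inner_apply, conj_trivial]
      ring
    have hprod : ∀ i : Fin n, ∫ ω, gradient f (x k ω) i * g k ω i ∂μ
        = ∫ ω, gradient f (x k ω) i * gradient f (x k ω) i ∂μ := by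
      intro i
      have hmul := condExp_mul_of_stronglyMeasurable_left (μ := μ) (hhm k i) (hint_uv i)
        ((hcoordL2 _ (hgL2 k) i).integrable one_le_two)
      have e1 : ∫ ω, gradient f (x k ω) i * g k ω i ∂μ
          = ∫ ω, (MeasureTheory.condExp (MeasurableSpace.comap (x k) inferInstance) μ
              ((fun ω => gradient f (x k ω) i) * fun ω => g k ω i)) ω ∂μ :=
        (integral_condExp hmle).symm
      have e2 : ∫ ω, (MeasureTheory.condExp (MeasurableSpace.comap (x k) inferInstance) μ
              ((fun ω => gradient f (x k ω) i) * fun ω => g k ω i)) ω ∂μ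
          = ∫ ω, ((fun ω => gradient f (x k ω) i)
              * MeasureTheory.condExp (MeasurableSpace.comap (x k) inferInstance) μ
                fun ω => g k ω i) ω ∂μ := integral_congr_ae hmul
      have e3 : ∫ ω, ((fun ω => gradient f (x k ω) i)
              * MeasureTheory.condExp (MeasurableSpace.comap (x k) inferInstance) μ
                fun ω => g k ω i) ω ∂μ
          = ∫ ω, gradient f (x k ω) i * gradient f (x k ω) i ∂μ := by
        refine integral_congr_ae ?_
        filter_upwards [hco i] with ω hω
        simp only [Pi.mul_apply]
        rw [hω]
      rw [e1, e2, e3]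
    calc ∫ ω, ⟪gradient f (x k ω), g k ω⟫_ℝ ∂μ
        = ∫ ω, ∑ i : Fin n, gradient f (x k ω) i * g k ω i ∂μ := by
          refine integral_congr_ae (Eventually.of_forall fun ω => ?_)
          simp only [PiLp.inner_apply, RCLike.inner_apply, conj_trivial, mul_comm]
      _ = ∑ i : Fin n, ∫ ω, gradient f (x k ω) i * g k ω i ∂μ := by
          rw [integral_finset_sum]; intro i _; exact hint_uv i
      _ = ∑ i : Fin n, ∫ ω, gradient f (x k ω) i * gradient f (x k ω) i ∂μ := by
          exact Finset.sum_congr rfl fun i _ => hprod i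
      _ = ∫ ω, ∑ i : Fin n, gradient f (x k ω) i * gradient f (x k ω) i ∂μ := by
          rw [integral_finset_sum]; intro i _; exact hint_uu i
      _ = ∫ ω, ‖gradient f (x k ω)‖ ^ 2 ∂μ := by
          refine integral_congr_ae (Eventually.of_forall fun ω => ?_)
          have h9 := real_inner_self_eq_norm_sq (gradient f (x k ω))
          simp only [PiLp.inner_apply, RCLike.inner_apply, conj_trivial] at h9
          simpa using h9
  -- variance bound
  have hvar : ∀ k, ∫ ω, ‖g k ω - gradient f (x k ω)‖ ^ 2 ∂μ
      ≤ (νIT ^ 2 + νOT ^ 2) * ∫ ω, ‖gradient f (x k ω)‖ ^ 2 ∂μ := by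
    intro k
    have hmle : MeasurableSpace.comap (x k) inferInstance ≤ _ := (hxmeas k).comap_le
    have hnint : Integrable (fun ω => ‖gradient f (x k ω)‖ ^ 2) μ := (hhL2 k).norm.integrable_sq
    calc ∫ ω, ‖g k ω - gradient f (x k ω)‖ ^ 2 ∂μ
        = ∫ ω, (MeasureTheory.condExp (MeasurableSpace.comap (x k) inferInstance) μ
            fun ω' => ‖g k ω' - gradient f (x k ω')‖ ^ 2) ω ∂μ := (integral_condExp hmle).symm
      _ ≤ ∫ ω, (νIT ^ 2 + νOT ^ 2) * ‖gradient f (x k ω)‖ ^ 2 ∂μ :=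
          integral_mono_ae integrable_condExp (hnint.const_mul _) (hvariance k)
      _ = (νIT ^ 2 + νOT ^ 2) * ∫ ω, ‖gradient f (x k ω)‖ ^ 2 ∂μ := integral_const_mul _ _
  -- second moment bound
  have hg2 : ∀ k, ∫ ω, ‖g k ω‖ ^ 2 ∂μ
      ≤ (1 + (νIT ^ 2 + νOT ^ 2)) * ∫ ω, ‖gradient f (x k ω)‖ ^ 2 ∂μ := by
    intro k
    have hdiffL2 : MemLp (fun ω => g k ω - gradient f (x k ω)) 2 μ := (hgL2 k).sub (hhL2 k)
    have hint1 : Integrable (fun ω => ‖g k ω - gradient f (x k ω)‖ ^ 2) μ :=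
      hdiffL2.norm.integrable_sq
    have hint2 : Integrable (fun ω => ‖gradient f (x k ω)‖ ^ 2) μ := (hhL2 k).norm.integrable_sq
    have hint3 : Integrable
        (fun ω => ⟪gradient f (x k ω), g k ω - gradient f (x k ω)⟫_ℝ) μ :=
      sgd_integrable_inner (hhL2 k) hdiffL2
    have hz : ∫ ω, ⟪gradient f (x k ω), g k ω - gradient f (x k ω)⟫_ℝ ∂μ = 0 := by
      have he : ∫ ω, ⟪gradient f (x k ω), g k ω - gradient f (x k ω)⟫_ℝ ∂μ
          = ∫ ω, (⟪gradient f (x k ω), g k ω⟫_ℝ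
              - ⟪gradient f (x k ω), gradient f (x k ω)⟫_ℝ) ∂μ := by
        refine integral_congr_ae (Eventually.of_forall fun ω => ?_)
        simp only [inner_sub_right]
      rw [he, integral_sub (sgd_integrable_inner (hhL2 k) (hgL2 k))
        (sgd_integrable_inner (hhL2 k) (hhL2 k)), hcross k]
      have h2 : ∫ ω, ⟪gradient f (x k ω), gradient f (x k ω)⟫_ℝ ∂μ
          = ∫ ω, ‖gradient f (x k ω)‖ ^ 2 ∂μ :=
        integral_congr_ae (Eventually.of_forall fun ω => real_inner_self_eq_norm_sq _)
      rw [h2, sub_self]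
    have hE : ∫ ω, ‖g k ω‖ ^ 2 ∂μ = ∫ ω, (‖g k ω - gradient f (x k ω)‖ ^ 2
          + 2 * ⟪gradient f (x k ω), g k ω - gradient f (x k ω)⟫_ℝ
          + ‖gradient f (x k ω)‖ ^ 2) ∂μ := by
      refine integral_congr_ae (Eventually.of_forall fun ω => ?_)
      have h3 := norm_add_sq_real (g k ω - gradient f (x k ω)) (gradient f (x k ω))
      rw [sub_add_cancel] at h3
      simp only []
      rw [h3, real_inner_comm]
    have hsplit1 : ∫ ω, (‖g k ω - gradient f (x k ω)‖ ^ 2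
          + 2 * ⟪gradient f (x k ω), g k ω - gradient f (x k ω)⟫_ℝ
          + ‖gradient f (x k ω)‖ ^ 2) ∂μ
        = ∫ ω, (‖g k ω - gradient f (x k ω)‖ ^ 2
          + 2 * ⟪gradient f (x k ω), g k ω - gradient f (x k ω)⟫_ℝ) ∂μ
          + ∫ ω, ‖gradient f (x k ω)‖ ^ 2 ∂μ :=
      integral_add (hint1.add (hint3.const_mul 2)) hint2
    have hsplit2 : ∫ ω, (‖g k ω - gradient f (x k ω)‖ ^ 2
          + 2 * ⟪gradient f (x k ω), g k ω - gradient f (x k ω)⟫_ℝ) ∂μ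
        = ∫ ω, ‖g k ω - gradient f (x k ω)‖ ^ 2 ∂μ
          + ∫ ω, 2 * ⟪gradient f (x k ω), g k ω - gradient f (x k ω)⟫_ℝ ∂μ :=
      integral_add hint1 (hint3.const_mul 2)
    rw [hE, hsplit1, hsplit2, integral_const_mul, hz]
    have := hvar k
    linarith
  -- integrability of f ∘ x k
  have hfub : ∀ z, |f z - f x0| ≤ ‖gradient f x0‖ * ‖z - x0‖
      + (3 * (L:ℝ) / 2) * ‖z - x0‖ ^ 2 := by
    intro z
    have h1 := sgd_descent_aux f L hf hlip x0 z
    have h2 := sgd_descent_aux f L hf hlip z x0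
    have h3 : ⟪gradient f x0, z - x0⟫_ℝ ≤ ‖gradient f x0‖ * ‖z - x0‖ := by
      have := real_inner_le_norm (gradient f x0) (z - x0); linarith
    have h4 : ⟪gradient f z, x0 - z⟫_ℝ ≤ ‖gradient f z‖ * ‖z - x0‖ := by
      have h5 := real_inner_le_norm (gradient f z) (x0 - z)
      rwa [norm_sub_rev] at h5
    have h5 : ‖gradient f z‖ ≤ ‖gradient f x0‖ + (L:ℝ) * ‖z - x0‖ := by
      have h6 := hlip.dist_le_mul z x0
      rw [dist_eq_norm, dist_eq_norm] at h6
      have h7 := norm_sub_norm_le (gradient f z) (gradient f x0)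
      linarith
    have h7 : ‖x0 - z‖ = ‖z - x0‖ := norm_sub_rev _ _
    rw [h7] at h2
    rw [abs_le]
    constructor <;> nlinarith [norm_nonneg (z - x0), norm_nonneg (gradient f x0),
      norm_nonneg (gradient f z), hL.le]
  have hfint : ∀ k, Integrable (fun ω => f (x k ω)) μ := by
    intro k
    have hsub : MemLp (fun ω => x k ω - x0) 2 μ := (hxL2 k).sub (memLp_const x0)
    have hn1 : Integrable (fun ω => ‖x k ω - x0‖) μ := (hsub.integrable one_le_two).norm
    have hn2 : Integrable (fun ω => ‖x k ω - x0‖ ^ 2) μ := hsub.norm.integrable_sq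
    have hD : Integrable (fun ω => |f x0| + ‖gradient f x0‖ * ‖x k ω - x0‖
        + (3 * (L:ℝ) / 2) * ‖x k ω - x0‖ ^ 2) μ :=
      ((integrable_const _).add (hn1.const_mul _)).add (hn2.const_mul _)
    refine hD.mono' ((hf.continuous.measurable.comp (hxmeas k)).aestronglyMeasurable)
      (Eventually.of_forall fun ω => ?_)
    have h1 := hfub (x k ω)
    have h2 := abs_sub_abs_le_abs_sub (f (x k ω)) (f x0)
    rw [Real.norm_eq_abs]
    linarith
  -- key per-step inequality
  have hkey : ∀ k, ∫ ω, f (x (k + 1) ω) ∂μ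
      ≤ ∫ ω, f (x k ω) ∂μ - α / 2 * ∫ ω, ‖gradient f (x k ω)‖ ^ 2 ∂μ := by
    intro k
    have hptw : ∀ ω, f (x (k + 1) ω) ≤ f (x k ω)
        - α * ⟪gradient f (x k ω), g k ω⟫_ℝ + ((L:ℝ) * α ^ 2 / 2) * ‖g k ω‖ ^ 2 := by
      intro ω
      have hd := sgd_descent_aux f L hf hlip (x k ω) (x (k + 1) ω)
      have he : x (k + 1) ω - x k ω = -(α • g k ω) := by
        rw [hupdate k ω]; abel
      rw [he] at hd
      have h1 : ⟪gradient f (x k ω), -(α • g k ω)⟫_ℝ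
          = -(α * ⟪gradient f (x k ω), g k ω⟫_ℝ) := by
        rw [inner_neg_right, real_inner_smul_right]
      have h2 : ‖-(α • g k ω)‖ ^ 2 = α ^ 2 * ‖g k ω‖ ^ 2 := by
        rw [norm_neg, norm_smul, mul_pow, Real.norm_eq_abs, sq_abs]
      rw [h1, h2] at hd
      nlinarith [hd]
    have hint_inner : Integrable (fun ω => ⟪gradient f (x k ω), g k ω⟫_ℝ) μ :=
      sgd_integrable_inner (hhL2 k) (hgL2 k)
    have hint_g2 : Integrable (fun ω => ‖g k ω‖ ^ 2) μ := (hgL2 k).norm.integrable_sq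
    have hstep1 : ∫ ω, f (x (k + 1) ω) ∂μ ≤ ∫ ω, (f (x k ω)
        - α * ⟪gradient f (x k ω), g k ω⟫_ℝ
        + ((L:ℝ) * α ^ 2 / 2) * ‖g k ω‖ ^ 2) ∂μ :=
      integral_mono (hfint (k + 1))
        (((hfint k).sub (hint_inner.const_mul α)).add (hint_g2.const_mul _)) hptw
    have hsA : ∫ ω, (f (x k ω) - α * ⟪gradient f (x k ω), g k ω⟫_ℝ
        + ((L:ℝ) * α ^ 2 / 2) * ‖g k ω‖ ^ 2) ∂μ
        = ∫ ω, (f (x k ω) - α * ⟪gradient f (x k ω), g k ω⟫_ℝ) ∂μ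
          + ∫ ω, ((L:ℝ) * α ^ 2 / 2) * ‖g k ω‖ ^ 2 ∂μ :=
      integral_add ((hfint k).sub (hint_inner.const_mul α)) (hint_g2.const_mul _)
    have hsB : ∫ ω, (f (x k ω) - α * ⟪gradient f (x k ω), g k ω⟫_ℝ) ∂μ
        = ∫ ω, f (x k ω) ∂μ - α * ∫ ω, ⟪gradient f (x k ω), g k ω⟫_ℝ ∂μ := by
      rw [integral_sub (hfint k) (hint_inner.const_mul α), integral_const_mul]
    rw [hsA, hsB, integral_const_mul, hcross k] at hstep1
    have hP : 0 ≤ ∫ ω, ‖gradient f (x k ω)‖ ^ 2 ∂μ :=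
      integral_nonneg fun ω => sq_nonneg _
    have hpos : (0:ℝ) < (1 + νIT ^ 2 + νOT ^ 2) * (L:ℝ) := by positivity
    have hstep2 : α * ((1 + νIT ^ 2 + νOT ^ 2) * (L:ℝ)) ≤ 1 := (le_div_iff₀ hpos).mp hstep
    have hg2k := hg2 k
    have hc : (0:ℝ) ≤ (L:ℝ) * α ^ 2 / 2 := by positivity
    nlinarith [mul_le_mul_of_nonneg_left hg2k hc, mul_nonneg hα.le hP,
      mul_nonneg (mul_nonneg hα.le hα.le) (mul_nonneg hL.le hP)]
  -- telescoping
  have htel : ∀ N : ℕ, ∫ ω, f (x N ω) ∂μ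
      + ∑ k ∈ Finset.range N, (α / 2 * ∫ ω, ‖gradient f (x k ω)‖ ^ 2 ∂μ) ≤ f x0 := by
    intro N
    induction N with
    | zero =>
      have hxi : ∫ ω, f (x 0 ω) ∂μ = f x0 := by
        have he : (fun ω => f (x 0 ω)) = fun _ => f x0 := funext fun ω => by rw [hx0 ω]
        rw [he, integral_const]
        simp
      simp [hxi]
    | succ N ih =>
      rw [Finset.sum_range_succ]
      have := hkey N
      linarith
  have hfin : ∑ k ∈ Finset.range T, (α / 2 * ∫ ω, ‖gradient f (x k ω)‖ ^ 2 ∂μ)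
      ≤ f x0 - fstar := by
    have h1 := htel T
    have h2 : fstar ≤ ∫ ω, f (x T ω) ∂μ := by
      have h3 : ∫ (_ : Ω), fstar ∂μ ≤ ∫ ω, f (x T ω) ∂μ :=
        integral_mono (integrable_const _) (hfint T) fun ω => hbelow _
      simpa using h3
    linarith
  -- min ≤ average
  by_contra hcon
  push_neg at hcon
  have hTpos : (0:ℝ) < T := by exact_mod_cast hT
  have hsum : ∑ k ∈ Finset.range T, (α / 2 * (2 / (α * T) * (f x0 - fstar)))
      < ∑ k ∈ Finset.range T, (α / 2 * ∫ ω, ‖gradient f (x k ω)‖ ^ 2 ∂μ) := by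
    refine Finset.sum_lt_sum_of_nonempty (Finset.nonempty_range_iff.mpr (by omega)) ?_
    intro k hk
    have h1 := hcon k (Finset.mem_range.mp hk)
    have hα2 : (0:ℝ) < α / 2 := by linarith
    exact mul_lt_mul_of_pos_left h1 hα2
  rw [Finset.sum_const, Finset.card_range, nsmul_eq_mul] at hsum
  have heq : (T:ℝ) * (α / 2 * (2 / (α * T) * (f x0 - fstar))) = f x0 - fstar := by
    field_simp
  rw [heq] at hsum
  linarith
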